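/- Let 0 < a < b and let γ₀,γ₁ ≥ 0 with γ₁ ≤ 2/b and γ₀ − γ₁ ≤ 2. Let (ū,v̄) be the unique smooth solution on ℂ∖{0} of Δū = 4(e^{aū} − e^{v̄−ū}), Δv̄ = 4(e^{v̄−ū} − e^{−av̄}) with asymptotic data (γ₀,γ₁), and let (ũ,ṽ) be the unique smooth solution of Δũ = 4(e^{bũ} − e^{ṽ−ũ}), Δṽ = 4(e^{ṽ−ũ} − e^{−bṽ}) with the same asymptotic data (γ₀,γ₁). Then ū ≤ ũ and v̄ ≤ ṽ on ℂ∖{0}. -/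

import Mathlib

open Filter

/-- The Euclidean Laplacian of `f : ℂ → ℝ`, viewing `ℂ ≅ ℝ²` with orthonormal
directions `1` and `I`. -/
noncomputable def lap (f : ℂ → ℝ) (z : ℂ) : ℝ :=
  iteratedFDeriv ℝ 2 f z ![1, 1] + iteratedFDeriv ℝ 2 f z ![Complex.I, Complex.I]

/-- `f` is smooth on `ℂ ∖ {0}`. -/
def SmoothOffZero (f : ℂ → ℝ) : Prop := ContDiffOn ℝ (⊤ : ℕ∞) f {(0 : ℂ)}ᶜ

/-- `f z → 0` as `|z| → ∞`. -/
def TendstoZeroAtInfty (f : ℂ → ℝ) : Prop :=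
  Tendsto f (comap (fun z : ℂ => ‖z‖) atTop) (nhds 0)

/-- `f z / log |z| → γ` as `z → 0`. -/
def LogAsymAtZero (γ : ℝ) (f : ℂ → ℝ) : Prop :=
  Tendsto (fun z : ℂ => f z / Real.log ‖z‖) (nhdsWithin 0 {(0 : ℂ)}ᶜ) (nhds γ)

/-- `(u, v)` is a smooth solution on `ℂ ∖ {0}` of the two-function tt*-Toda system
`Δu = 4(e^{au} − e^{v−u})`, `Δv = 4(e^{v−u} − e^{−bv})`. -/
def IsTodaSol (a b : ℝ) (u v : ℂ → ℝ) : Prop :=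
  SmoothOffZero u ∧ SmoothOffZero v ∧
  ∀ z : ℂ, z ≠ 0 →
    lap u z = 4 * (Real.exp (a * u z) - Real.exp (v z - u z)) ∧
    lap v z = 4 * (Real.exp (v z - u z) - Real.exp (-(b * v z)))

/-- `(u, v)` has asymptotic data `(γ, δ)`: `u, v → 0` at `∞` and
`u(z)/log|z| → γ`, `v(z)/log|z| → δ` at `0`. -/
def HasAsymData (γ δ : ℝ) (u v : ℂ → ℝ) : Prop :=
  TendstoZeroAtInfty u ∧ TendstoZeroAtInfty v ∧ LogAsymAtZero γ u ∧ LogAsymAtZero δ v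


section Aux
open Filter Set

theorem lap_eq (f : ℂ → ℝ) (z : ℂ) :
    lap f z = fderiv ℝ (fderiv ℝ f) z 1 1 + fderiv ℝ (fderiv ℝ f) z Complex.I Complex.I := by
  simp [lap, iteratedFDeriv_two_apply]

theorem lap_sub {f g : ℂ → ℝ} {s : Set ℂ} (hs : IsOpen s) {ζ : ℂ} (hζ : ζ ∈ s)
    (hf : ContDiffOn ℝ (⊤ : ℕ∞) f s) (hg : ContDiffOn ℝ (⊤ : ℕ∞) g s) :
    lap (fun z => f z - g z) ζ = lap f ζ - lap g ζ := by
  have hdf : ContDiffOn ℝ (⊤ : ℕ∞) (fderiv ℝ f) s := hf.fderiv_of_isOpen hs (by simp)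
  have hdg : ContDiffOn ℝ (⊤ : ℕ∞) (fderiv ℝ g) s := hg.fderiv_of_isOpen hs (by simp)
  have hev : (fderiv ℝ (fun z => f z - g z)) =ᶠ[nhds ζ] (fun w => fderiv ℝ f w - fderiv ℝ g w) := by
    filter_upwards [hs.mem_nhds hζ] with w hw
    exact fderiv_sub ((hf.contDiffAt (hs.mem_nhds hw)).differentiableAt (by simp))
      ((hg.contDiffAt (hs.mem_nhds hw)).differentiableAt (by simp))
  have hDf : DifferentiableAt ℝ (fderiv ℝ f) ζ :=
    (hdf.contDiffAt (hs.mem_nhds hζ)).differentiableAt (by simp)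
  have hDg : DifferentiableAt ℝ (fderiv ℝ g) ζ :=
    (hdg.contDiffAt (hs.mem_nhds hζ)).differentiableAt (by simp)
  have key : fderiv ℝ (fderiv ℝ (fun z => f z - g z)) ζ
      = fderiv ℝ (fderiv ℝ f) ζ - fderiv ℝ (fderiv ℝ g) ζ := by
    rw [hev.fderiv_eq]
    exact fderiv_sub hDf hDg
  simp [lap_eq, key]
  ring

theorem lap_const_mul {f : ℂ → ℝ} {s : Set ℂ} (hs : IsOpen s) {ζ : ℂ} (hζ : ζ ∈ s)
    (hf : ContDiffOn ℝ (⊤ : ℕ∞) f s) (c : ℝ) :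
    lap (fun z => c * f z) ζ = c * lap f ζ := by
  have hdf : ContDiffOn ℝ (⊤ : ℕ∞) (fderiv ℝ f) s := hf.fderiv_of_isOpen hs (by simp)
  have hev : (fderiv ℝ (fun z => c * f z)) =ᶠ[nhds ζ] (fun w => c • fderiv ℝ f w) := by
    filter_upwards [hs.mem_nhds hζ] with w hw
    exact fderiv_const_mul ((hf.contDiffAt (hs.mem_nhds hw)).differentiableAt (by simp)) c
  have hDf : DifferentiableAt ℝ (fderiv ℝ f) ζ :=
    (hdf.contDiffAt (hs.mem_nhds hζ)).differentiableAt (by simp)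
  have key : fderiv ℝ (fderiv ℝ (fun z => c * f z)) ζ = c • fderiv ℝ (fderiv ℝ f) ζ := by
    rw [hev.fderiv_eq]
    exact fderiv_const_smul hDf c
  simp [lap_eq, key]
  ring

theorem lap_const (c : ℝ) (ζ : ℂ) : lap (fun _ => c) ζ = 0 := by
  have h1 : fderiv ℝ (fun _ : ℂ => c) = fun _ => 0 := by
    funext w; exact fderiv_const_apply c
  simp [lap_eq, h1]

noncomputable def logAbs : ℂ → ℝ := fun z => Real.log (‖z‖)

theorem logAbs_eq : logAbs = fun z => Real.log (Complex.normSq z) / 2 := by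
  funext z
  rw [logAbs, Complex.norm_def, Real.log_sqrt (Complex.normSq_nonneg z)]

theorem contDiff_normSq : ContDiff ℝ (⊤ : ℕ∞) (fun z : ℂ => Complex.normSq z) := by
  have : (fun z : ℂ => Complex.normSq z) = fun z : ℂ => z.re * z.re + z.im * z.im := by
    funext z; rw [Complex.normSq_apply]
  rw [this]
  exact (Complex.reCLM.contDiff.mul Complex.reCLM.contDiff).add
    (Complex.imCLM.contDiff.mul Complex.imCLM.contDiff)

theorem contDiffOn_logAbs : ContDiffOn ℝ (⊤ : ℕ∞) logAbs {(0:ℂ)}ᶜ := by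
  rw [logAbs_eq]
  apply ContDiffOn.div_const
  apply ContDiffOn.comp (t := {(0:ℝ)}ᶜ) Real.contDiffOn_log (contDiff_normSq.contDiffOn)
  intro z hz
  simp only [mem_compl_iff, mem_singleton_iff] at hz ⊢
  exact (Complex.normSq_pos.2 hz).ne'

noncomputable def NdCLM (z : ℂ) : ℂ →L[ℝ] ℝ :=
  (2 * z.re) • Complex.reCLM + (2 * z.im) • Complex.imCLM

theorem hasFDerivAt_normSq (z : ℂ) :
    HasFDerivAt (fun z : ℂ => Complex.normSq z) (NdCLM z) z := by
  have h1 : HasFDerivAt (fun z : ℂ => z.re) Complex.reCLM z := Complex.reCLM.hasFDerivAt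
  have h2 : HasFDerivAt (fun z : ℂ => z.im) Complex.imCLM z := Complex.imCLM.hasFDerivAt
  have h3 := (h1.mul h1).add (h2.mul h2)
  have : (fun z : ℂ => Complex.normSq z) = fun z : ℂ => z.re * z.re + z.im * z.im := by
    funext z; rw [Complex.normSq_apply]
  rw [this]
  refine h3.congr_fderiv ?_
  ext w
  simp [NdCLM]
  ring

/-- derivative of logAbs -/
noncomputable def FL (z : ℂ) : ℂ →L[ℝ] ℝ :=
  (Complex.normSq z)⁻¹ • (z.re • Complex.reCLM + z.im • Complex.imCLM)

theorem hasFDerivAt_logAbs {z : ℂ} (hz : z ≠ 0) : HasFDerivAt logAbs (FL z) z := by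
  have hN : Complex.normSq z ≠ 0 := (Complex.normSq_pos.2 hz).ne'
  have h1 : HasDerivAt Real.log (Complex.normSq z)⁻¹ (Complex.normSq z) :=
    Real.hasDerivAt_log hN
  have h2 := (h1.comp_hasFDerivAt z (hasFDerivAt_normSq z)).const_smul ((2:ℝ)⁻¹)
  have hfun : (fun x : ℂ => (2:ℝ)⁻¹ • (Real.log ∘ Complex.normSq) x)
      = fun z : ℂ => Real.log (Complex.normSq z) / 2 := by
    funext w
    simp [smul_eq_mul, div_eq_inv_mul, Function.comp]
  have hder : FL z = (2:ℝ)⁻¹ • ((Complex.normSq z)⁻¹ • NdCLM z) := by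
    ext w
    simp [FL, NdCLM]
    field_simp
  rw [logAbs_eq, ← hfun, hder]
  exact h2

set_option maxHeartbeats 1000000 in
theorem lap_logAbs {ζ : ℂ} (hζ : ζ ≠ 0) : lap logAbs ζ = 0 := by
  have hN : Complex.normSq ζ ≠ 0 := (Complex.normSq_pos.2 hζ).ne'
  -- fderiv logAbs = FL near ζ
  have hev : (fderiv ℝ logAbs) =ᶠ[nhds ζ] FL := by
    have : {(0:ℂ)}ᶜ ∈ nhds ζ := (isOpen_compl_singleton).mem_nhds hζ
    filter_upwards [this] with w hw
    exact (hasFDerivAt_logAbs hw).fderiv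
  -- derivative of FL at ζ
  have hinv : HasFDerivAt (fun z : ℂ => (Complex.normSq z)⁻¹)
      (-((Complex.normSq ζ ^ 2)⁻¹) • NdCLM ζ) ζ := by
    exact (hasDerivAt_inv hN).comp_hasFDerivAt ζ (hasFDerivAt_normSq ζ)
  have hG : HasFDerivAt (fun z : ℂ => z.re • Complex.reCLM + z.im • Complex.imCLM)
      (Complex.reCLM.smulRight Complex.reCLM + Complex.imCLM.smulRight Complex.imCLM) ζ := by
    exact (Complex.reCLM.hasFDerivAt.smul_const Complex.reCLM).add
      (Complex.imCLM.hasFDerivAt.smul_const Complex.imCLM)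
  have hFL : HasFDerivAt FL
      ((Complex.normSq ζ)⁻¹ • (Complex.reCLM.smulRight Complex.reCLM + Complex.imCLM.smulRight Complex.imCLM)
        + (-((Complex.normSq ζ ^ 2)⁻¹) • NdCLM ζ).smulRight (ζ.re • Complex.reCLM + ζ.im • Complex.imCLM)) ζ := by
    exact hinv.smul hG
  have key : fderiv ℝ (fderiv ℝ logAbs) ζ
      = (Complex.normSq ζ)⁻¹ • (Complex.reCLM.smulRight Complex.reCLM + Complex.imCLM.smulRight Complex.imCLM)
        + (-((Complex.normSq ζ ^ 2)⁻¹) • NdCLM ζ).smulRight (ζ.re • Complex.reCLM + ζ.im • Complex.imCLM) := by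
    rw [hev.fderiv_eq]
    exact hFL.fderiv
  rw [lap_eq, key]
  have h0 : 0 < Complex.normSq ζ := Complex.normSq_pos.2 hζ
  rw [Complex.normSq_apply] at h0
  have h2 : 0 < ζ.re^2 + ζ.im^2 := by nlinarith
  have h4 : 0 < ζ.re^2*ζ.im^2*2 + ζ.re^4 + ζ.im^4 := by nlinarith
  simp [NdCLM, Complex.normSq_apply]
  field_simp
  ring

/-- 1D second derivative test: if `g` has derivative `g1` near `0`, `g1` has derivative
`c` at `0`, and `g` has a local max at `0`, then `c ≤ 0`. -/
theorem second_deriv_test {g g1 : ℝ → ℝ} {c : ℝ}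
    (hg : ∀ᶠ t in nhds 0, HasDerivAt g (g1 t) t)
    (hg1 : HasDerivAt g1 c 0) (hmax : IsLocalMax g 0) : c ≤ 0 := by
  by_contra hc
  push_neg at hc
  have hg0 : HasDerivAt g (g1 0) 0 := hg.self_of_nhds
  have h10 : g1 0 = 0 := by
    have := hmax.deriv_eq_zero
    rwa [hg0.deriv] at this
  -- slope of g1 tends to c > 0, so g1 t > 0 for small t > 0
  have hslope : Tendsto (slope g1 0) (nhdsWithin 0 {(0:ℝ)}ᶜ) (nhds c) :=
    hasDerivAt_iff_tendsto_slope.1 hg1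
  have hpos : ∀ᶠ t in nhdsWithin 0 {(0:ℝ)}ᶜ, 0 < slope g1 0 t :=
    hslope.eventually (eventually_gt_nhds hc)
  rw [eventually_nhdsWithin_iff] at hpos
  obtain ⟨δ, hδ, hball⟩ := Metric.eventually_nhds_iff.1 (hpos.and hg)
  -- g1 > 0 on (0, δ)
  have hg1pos : ∀ t ∈ Ioo (0:ℝ) δ, 0 < g1 t := by
    intro t ht
    have h1 := (hball (y := t) (by simp [abs_of_pos ht.1, ht.2])).1 (by simp [ne_of_gt ht.1])
    have : slope g1 0 t = g1 t / t := by simp [slope, h10, div_eq_inv_mul]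
    rw [this] at h1
    have := mul_pos h1 ht.1
    rwa [div_mul_cancel₀] at this
    exact ne_of_gt ht.1
  -- g strictly increasing on [0, δ/2]
  have hmono : StrictMonoOn g (Icc 0 (δ/2)) := by
    apply strictMonoOn_of_deriv_pos (convex_Icc _ _)
    · intro t ht
      by_cases h : t = 0
      · exact (h ▸ hg0).continuousAt.continuousWithinAt
      · have ht0 : 0 < t := lt_of_le_of_ne ht.1 (Ne.symm h)
        exact ((hball (y := t) (by rw [Real.dist_eq, sub_zero, abs_of_pos ht0]; linarith [ht.2])).2).continuousAt.continuousWithinAt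
    · intro t ht
      rw [interior_Icc] at ht
      have : HasDerivAt g (g1 t) t :=
        (hball (y := t) (by rw [Real.dist_eq, sub_zero, abs_of_pos ht.1]; linarith [ht.2])).2
      rw [this.deriv]
      exact hg1pos t ⟨ht.1, by linarith [ht.2]⟩
  -- contradiction with local max
  obtain ⟨ε, hε, hmax'⟩ := Metric.eventually_nhds_iff.1 hmax
  set t := min (δ/2) (ε/2) with ht
  have htpos : 0 < t := lt_min (by linarith) (by linarith)
  have h1 : g 0 < g t := hmono ⟨le_refl 0, by positivity⟩ ⟨le_of_lt htpos, min_le_left _ _⟩ htpos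
  have h2 : g t ≤ g 0 := hmax' (by rw [Real.dist_eq, sub_zero, abs_of_pos htpos]; exact lt_of_le_of_lt (min_le_right _ _) (by linarith))
  linarith

theorem d2_nonpos {f : ℂ → ℝ} {s : Set ℂ} (hs : IsOpen s) {ζ : ℂ} (hζ : ζ ∈ s)
    (hf : ContDiffOn ℝ (⊤ : ℕ∞) f s) (hmax : IsLocalMax f ζ) (d : ℂ) :
    fderiv ℝ (fderiv ℝ f) ζ d d ≤ 0 := by
  have hdf : ContDiffOn ℝ (⊤ : ℕ∞) (fderiv ℝ f) s :=
    hf.fderiv_of_isOpen hs (by simp)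
  set path : ℝ → ℂ := fun t => ζ + t • d with hpath
  have hpathc : Continuous path := by fun_prop
  have hpath0 : path 0 = ζ := by simp [hpath]
  have hpathd : ∀ t : ℝ, HasDerivAt path d t := by
    intro t
    simpa [hpath] using ((hasDerivAt_id t).smul_const d).const_add ζ
  set g : ℝ → ℝ := fun t => f (path t) with hgdef
  set g1 : ℝ → ℝ := fun t => fderiv ℝ f (path t) d with hg1def
  have htend : Tendsto path (nhds 0) (nhds ζ) := by
    rw [← hpath0]; exact hpathc.continuousAt
  have hnear : ∀ᶠ t in nhds 0, path t ∈ s := htend.eventually (hs.mem_nhds hζ)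
  have hg : ∀ᶠ t in nhds 0, HasDerivAt g (g1 t) t := by
    filter_upwards [hnear] with t ht
    have hfd : HasFDerivAt f (fderiv ℝ f (path t)) (path t) :=
      ((hf.contDiffAt (hs.mem_nhds ht)).differentiableAt (by simp)).hasFDerivAt
    exact hfd.comp_hasDerivAt t (hpathd t)
  have hg1 : HasDerivAt g1 (fderiv ℝ (fderiv ℝ f) ζ d d) 0 := by
    have h2 : HasFDerivAt (fderiv ℝ f) (fderiv ℝ (fderiv ℝ f) ζ) ζ :=
      ((hdf.contDiffAt (hs.mem_nhds hζ)).differentiableAt (by simp)).hasFDerivAt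
    have h3 : HasFDerivAt (fun w => fderiv ℝ f w d)
        ((fderiv ℝ (fderiv ℝ f) ζ).flip d) ζ := by
      have := h2.clm_apply (hasFDerivAt_const d ζ)
      simpa using this
    have h4 := h3.comp_hasDerivAt_of_eq (x := (0:ℝ)) (hpathd 0) hpath0.symm
    exact h4
  have hgmax : IsLocalMax g 0 := by
    have := htend.eventually hmax
    simpa [IsLocalMax, IsMaxFilter, hgdef, hpath0] using this
  exact second_deriv_test hg hg1 hgmax


theorem lap_nonpos_of_localMax {f : ℂ → ℝ} {s : Set ℂ} (hs : IsOpen s) {ζ : ℂ} (hζ : ζ ∈ s)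
    (hf : ContDiffOn ℝ (⊤ : ℕ∞) f s) (hmax : IsLocalMax f ζ) : lap f ζ ≤ 0 := by
  rw [lap_eq]
  have h1 := d2_nonpos hs hζ hf hmax 1
  have h2 := d2_nonpos hs hζ hf hmax Complex.I
  linarith


theorem lap_add {f g : ℂ → ℝ} {s : Set ℂ} (hs : IsOpen s) {ζ : ℂ} (hζ : ζ ∈ s)
    (hf : ContDiffOn ℝ (⊤ : ℕ∞) f s) (hg : ContDiffOn ℝ (⊤ : ℕ∞) g s) :
    lap (fun z => f z + g z) ζ = lap f ζ + lap g ζ := by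
  have hdf : ContDiffOn ℝ (⊤ : ℕ∞) (fderiv ℝ f) s := hf.fderiv_of_isOpen hs (by simp)
  have hdg : ContDiffOn ℝ (⊤ : ℕ∞) (fderiv ℝ g) s := hg.fderiv_of_isOpen hs (by simp)
  have hev : (fderiv ℝ (fun z => f z + g z)) =ᶠ[nhds ζ] (fun w => fderiv ℝ f w + fderiv ℝ g w) := by
    filter_upwards [hs.mem_nhds hζ] with w hw
    exact fderiv_add ((hf.contDiffAt (hs.mem_nhds hw)).differentiableAt (by simp))
      ((hg.contDiffAt (hs.mem_nhds hw)).differentiableAt (by simp))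
  have hDf : DifferentiableAt ℝ (fderiv ℝ f) ζ :=
    (hdf.contDiffAt (hs.mem_nhds hζ)).differentiableAt (by simp)
  have hDg : DifferentiableAt ℝ (fderiv ℝ g) ζ :=
    (hdg.contDiffAt (hs.mem_nhds hζ)).differentiableAt (by simp)
  have key : fderiv ℝ (fderiv ℝ (fun z => f z + g z)) ζ
      = fderiv ℝ (fderiv ℝ f) ζ + fderiv ℝ (fderiv ℝ g) ζ := by
    rw [hev.fderiv_eq]
    exact fderiv_add hDf hDg
  simp [lap_eq, key]
  ring

theorem atInfty_bound {f : ℂ → ℝ} (hf : TendstoZeroAtInfty f) {ε : ℝ} (hε : 0 < ε) :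
    ∃ R : ℝ, ∀ z : ℂ, R ≤ ‖z‖ → f z ≤ ε := by
  have h1 : ∀ᶠ z in comap (fun z : ℂ => ‖z‖) atTop, f z < ε :=
    hf.eventually (eventually_lt_nhds hε)
  rw [eventually_comap, eventually_atTop] at h1
  obtain ⟨R, hR⟩ := h1
  exact ⟨R, fun z hz => le_of_lt (hR (‖z‖) hz z rfl)⟩

theorem nearZero_bound {f : ℂ → ℝ} {γ : ℝ} (hγ : 0 ≤ γ) (hf : LogAsymAtZero γ f)
    {ε : ℝ} (hε : 0 < ε) :
    ∃ δ > 0, δ ≤ 1/2 ∧ ∀ z : ℂ, z ≠ 0 → ‖z‖ ≤ δ →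
      f z ≤ -ε * Real.log (‖z‖) := by
  have h1 : ∀ᶠ z in nhdsWithin 0 {(0:ℂ)}ᶜ, γ - ε < f z / Real.log (‖z‖) :=
    hf.eventually (eventually_gt_nhds (by linarith))
  obtain ⟨δ', hδ', hsub⟩ := Metric.mem_nhdsWithin_iff.1 h1
  refine ⟨min (δ'/2) (1/2), by positivity, min_le_right _ _, ?_⟩
  intro z hz habs
  have hz1 : ‖z‖ < δ' := lt_of_le_of_lt (le_trans habs (min_le_left _ _)) (by linarith)
  have hzmem : z ∈ Metric.ball (0:ℂ) δ' ∩ {(0:ℂ)}ᶜ := by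
    constructor
    · simpa [Metric.mem_ball, Complex.dist_eq] using hz1
    · simpa using hz
  have hratio := hsub hzmem
  have habs_pos : 0 < ‖z‖ := by simpa [norm_pos_iff] using hz
  have hL : Real.log (‖z‖) < 0 :=
    Real.log_neg habs_pos (lt_of_le_of_lt (le_trans habs (min_le_right _ _)) (by norm_num))
  set L := Real.log (‖z‖)
  have hfz : f z = (f z / L) * L := (div_mul_cancel₀ _ (ne_of_lt hL)).symm
  have h2 : (f z / L) * L < (γ - ε) * L := by
    exact mul_lt_mul_of_neg_right hratio hL
  have h3 : γ * L ≤ 0 := mul_nonpos_of_nonneg_of_nonpos hγ (le_of_lt hL)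
  have : f z < -ε * L := by
    rw [hfz]
    calc (f z / L) * L < (γ - ε) * L := h2
      _ = γ * L + (-ε * L) := by ring
      _ ≤ -ε * L := by linarith
  linarith

/-- Key maximum principle for pairs. -/
theorem keyMP (p q : ℂ → ℝ)
    (hp : ContDiffOn ℝ (⊤ : ℕ∞) p {(0:ℂ)}ᶜ) (hq : ContDiffOn ℝ (⊤ : ℕ∞) q {(0:ℂ)}ᶜ)
    (hpI : ∀ ε : ℝ, 0 < ε → ∃ R : ℝ, ∀ z : ℂ, R ≤ ‖z‖ → p z ≤ ε)
    (hqI : ∀ ε : ℝ, 0 < ε → ∃ R : ℝ, ∀ z : ℂ, R ≤ ‖z‖ → q z ≤ ε)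
    (hp0 : ∀ ε : ℝ, 0 < ε → ∃ δ > 0, δ ≤ 1/2 ∧ ∀ z : ℂ, z ≠ 0 → ‖z‖ ≤ δ →
      p z ≤ -ε * Real.log (‖z‖))
    (hq0 : ∀ ε : ℝ, 0 < ε → ∃ δ > 0, δ ≤ 1/2 ∧ ∀ z : ℂ, z ≠ 0 → ‖z‖ ≤ δ →
      q z ≤ -ε * Real.log (‖z‖))
    (hlap : ∀ z : ℂ, z ≠ 0 →
      (0 < p z → q z ≤ p z → 0 < lap p z) ∧ (0 < q z → p z ≤ q z → 0 < lap q z)) :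
    ∀ z : ℂ, z ≠ 0 → p z ≤ 0 ∧ q z ≤ 0 := by
  intro z₀ hz₀
  have habs₀ : 0 < ‖z₀‖ := by simpa [norm_pos_iff] using hz₀
  -- it suffices to show max (p z₀) (q z₀) ≤ ε for all ε > 0
  suffices H : ∀ ε : ℝ, 0 < ε → max (p z₀) (q z₀) ≤ ε by
    have : max (p z₀) (q z₀) ≤ 0 := le_of_forall_pos_le_add (by
      intro ε hε; simpa using H ε hε)
    exact ⟨le_trans (le_max_left _ _) this, le_trans (le_max_right _ _) this⟩
  intro ε hε
  obtain ⟨R₁, hR₁⟩ := hpI ε hε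
  obtain ⟨R₂, hR₂⟩ := hqI ε hε
  set R : ℝ := max (max R₁ R₂) (max 1 (‖z₀‖)) with hRdef
  have hR1 : (1:ℝ) ≤ R := le_trans (le_max_left _ _) (le_max_right _ _)
  have hRz₀ : ‖z₀‖ ≤ R := le_trans (le_max_right _ _) (le_max_right _ _)
  have hRpos : 0 < R := lt_of_lt_of_le one_pos hR1
  have hC : 0 ≤ Real.log R - Real.log (‖z₀‖) :=
    sub_nonneg.2 (Real.log_le_log habs₀ hRz₀)
  -- it suffices to show the bound with barrier constant for all ε' > 0
  suffices H' : ∀ ε' : ℝ, 0 < ε' →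
      max (p z₀) (q z₀) ≤ ε + ε' * (Real.log R - Real.log (‖z₀‖)) by
    by_contra hcon
    push_neg at hcon
    set M := max (p z₀) (q z₀)
    set C := Real.log R - Real.log (‖z₀‖)
    have ht : 0 < (M - ε) / (C + 1) := div_pos (by linarith) (by linarith)
    have := H' _ ht
    have hCC : (M - ε) / (C + 1) * C < (M - ε) / (C + 1) * (C + 1) :=
      mul_lt_mul_of_pos_left (by linarith) ht
    rw [div_mul_cancel₀ _ (by linarith : C + 1 ≠ 0)] at hCC
    simp only [M, C] at this hCC
    linarith
  intro ε' hε'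
  obtain ⟨δ₁, hδ₁pos, hδ₁half, hδ₁⟩ := hp0 ε' hε'
  obtain ⟨δ₂, hδ₂pos, hδ₂half, hδ₂⟩ := hq0 ε' hε'
  set δ : ℝ := min (min δ₁ δ₂) (‖z₀‖) with hδdef
  have hδpos : 0 < δ := lt_min (lt_min hδ₁pos hδ₂pos) habs₀
  have hδz₀ : δ ≤ ‖z₀‖ := min_le_right _ _
  -- barrier
  set h : ℂ → ℝ := fun z => (ε + ε' * Real.log R) - ε' * logAbs z with hhdef
  have hh_smooth : ContDiffOn ℝ (⊤ : ℕ∞) h {(0:ℂ)}ᶜ :=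
    contDiffOn_const.sub (contDiffOn_const.mul contDiffOn_logAbs)
  have hh_lap : ∀ ζ : ℂ, ζ ≠ 0 → lap h ζ = 0 := by
    intro ζ hζ
    have hζ' : ζ ∈ ({(0:ℂ)}ᶜ : Set ℂ) := by simpa using hζ
    rw [hhdef]
    rw [lap_sub isOpen_compl_singleton hζ' contDiffOn_const
      (contDiffOn_const.mul contDiffOn_logAbs), lap_const,
      lap_const_mul isOpen_compl_singleton hζ' contDiffOn_logAbs, lap_logAbs hζ]
    ring
  -- the compact annulus
  set A : Set ℂ := Metric.closedBall 0 R \ Metric.ball 0 δ with hAdef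
  have hA_sub : A ⊆ {(0:ℂ)}ᶜ := by
    intro z hz
    simp only [hAdef, mem_diff, Metric.mem_closedBall, Metric.mem_ball, Complex.dist_eq,
      sub_zero] at hz
    simp only [mem_compl_iff, mem_singleton_iff]
    intro h0
    rw [h0] at hz
    simp at hz
    linarith [hz.2, hδpos]
  have hA_mem : ∀ z : ℂ, z ∈ A ↔ δ ≤ ‖z‖ ∧ ‖z‖ ≤ R := by
    intro z
    simp [hAdef, Complex.dist_eq, not_lt]
    tauto
  have hA_compact : IsCompact A := (isCompact_closedBall 0 R).diff Metric.isOpen_ball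
  have hz₀A : z₀ ∈ A := (hA_mem z₀).2 ⟨hδz₀, hRz₀⟩
  -- φ = max (p - h) (q - h) attains a max on A
  set φ : ℂ → ℝ := fun z => max (p z - h z) (q z - h z) with hφdef
  have hφcont : ContinuousOn φ A :=
    ((hp.continuousOn.mono hA_sub).sub (hh_smooth.continuousOn.mono hA_sub)).sup
      ((hq.continuousOn.mono hA_sub).sub (hh_smooth.continuousOn.mono hA_sub))
  obtain ⟨ζ, hζA, hζmax⟩ := hA_compact.exists_isMaxOn ⟨z₀, hz₀A⟩ hφcont
  have hζ0 : ζ ≠ 0 := by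
    have := hA_sub hζA
    simpa using this
  have hζabs : δ ≤ ‖ζ‖ ∧ ‖ζ‖ ≤ R := (hA_mem ζ).1 hζA
  have habsζ : 0 < ‖ζ‖ := lt_of_lt_of_le hδpos hζabs.1
  -- h ≥ ε on A
  have hh_lb : ∀ z : ℂ, z ≠ 0 → ‖z‖ ≤ R → ε ≤ h z := by
    intro z hz hzR
    have : Real.log (‖z‖) ≤ Real.log R :=
      Real.log_le_log (by simpa [norm_pos_iff] using hz) hzR
    simp only [hhdef, logAbs]
    nlinarith
  -- the max value is ≤ 0
  have hφζ : φ ζ ≤ 0 := by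
    rcases le_or_gt (‖ζ‖) δ with hb | hi
    · -- inner boundary: |ζ| = δ ≤ min δ₁ δ₂
      have hδ1 : ‖ζ‖ ≤ δ₁ := le_trans hb (le_trans (min_le_left _ _) (min_le_left _ _))
      have hδ2 : ‖ζ‖ ≤ δ₂ := le_trans hb (le_trans (min_le_left _ _) (min_le_right _ _))
      have hp' := hδ₁ ζ hζ0 hδ1
      have hq' := hδ₂ ζ hζ0 hδ2
      have hlogR : 0 ≤ Real.log R := Real.log_nonneg hR1
      have hhb : -ε' * Real.log (‖ζ‖) ≤ h ζ := by
        simp only [hhdef, logAbs]; nlinarith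
      simp only [hφdef]
      apply max_le <;> linarith
    · rcases le_or_gt R (‖ζ‖) with ho | hii
      · -- outer boundary
        have hp' := hR₁ ζ (le_trans (le_trans (le_max_left _ _) (le_max_left _ _)) ho)
        have hq' := hR₂ ζ (le_trans (le_trans (le_max_right _ _) (le_max_left _ _)) ho)
        have hhb := hh_lb ζ hζ0 hζabs.2
        simp only [hφdef]
        apply max_le <;> linarith
      · -- interior point: suppose φ ζ > 0 and derive a contradiction
        by_contra hcon
        push_neg at hcon
        -- interior open set
        set U : Set ℂ := Metric.ball 0 R \ Metric.closedBall 0 δ with hUdef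
        have hU_open : IsOpen U := Metric.isOpen_ball.sdiff Metric.isClosed_closedBall
        have hζU : ζ ∈ U := by
          simp only [hUdef, mem_diff, Metric.mem_ball, Metric.mem_closedBall, Complex.dist_eq,
            sub_zero, not_le]
          exact ⟨hii, hi⟩
        have hU_sub : U ⊆ A := by
          intro z hz
          simp only [hUdef, mem_diff, Metric.mem_ball, Metric.mem_closedBall, Complex.dist_eq,
            sub_zero, not_le] at hz
          exact (hA_mem z).2 ⟨le_of_lt hz.2, le_of_lt hz.1⟩
        have hεhζ : ε ≤ h ζ := hh_lb ζ hζ0 hζabs.2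
        -- whichever of p, q attains the max at ζ
        rcases max_cases (p ζ - h ζ) (q ζ - h ζ) with ⟨heq, hge⟩ | ⟨heq, hge⟩
        · -- p case
          have hpζ : 0 < p ζ := by
            simp only [hφdef] at hcon
            rw [heq] at hcon
            have hεhζ' := hεhζ
            linarith
          have hqp : q ζ ≤ p ζ := by linarith
          have hlappos := (hlap ζ hζ0).1 hpζ hqp
          have hlocmax : IsLocalMax (fun z => p z - h z) ζ := by
            filter_upwards [hU_open.mem_nhds hζU] with z hz
            have h1 : p z - h z ≤ φ z := le_max_left _ _
            have h2 : φ z ≤ φ ζ := hζmax (hU_sub hz)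
            simp only [hφdef] at h2
            rw [heq] at h2
            exact le_trans h1 h2
          have hlemma := lap_nonpos_of_localMax isOpen_compl_singleton
            (by simpa using hζ0) (hp.sub hh_smooth) hlocmax
          rw [lap_sub isOpen_compl_singleton (by simpa using hζ0) hp hh_smooth] at hlemma
          rw [hh_lap ζ hζ0] at hlemma
          linarith
        · -- q case
          have hqζ : 0 < q ζ := by
            simp only [hφdef] at hcon
            rw [heq] at hcon
            linarith
          have hpq : p ζ ≤ q ζ := by linarith
          have hlappos := (hlap ζ hζ0).2 hqζ hpq
          have hlocmax : IsLocalMax (fun z => q z - h z) ζ := by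
            filter_upwards [hU_open.mem_nhds hζU] with z hz
            have h1 : q z - h z ≤ φ z := le_max_right _ _
            have h2 : φ z ≤ φ ζ := hζmax (hU_sub hz)
            simp only [hφdef] at h2
            rw [heq] at h2
            exact le_trans h1 h2
          have hlemma := lap_nonpos_of_localMax isOpen_compl_singleton
            (by simpa using hζ0) (hq.sub hh_smooth) hlocmax
          rw [lap_sub isOpen_compl_singleton (by simpa using hζ0) hq hh_smooth] at hlemma
          rw [hh_lap ζ hζ0] at hlemma
          linarith
  -- conclude
  have hφz₀ : φ z₀ ≤ 0 := le_trans (hζmax hz₀A) hφζ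
  have h1 : p z₀ ≤ h z₀ := by
    have := le_trans (le_max_left (p z₀ - h z₀) (q z₀ - h z₀)) hφz₀
    linarith
  have h2 : q z₀ ≤ h z₀ := by
    have := le_trans (le_max_right (p z₀ - h z₀) (q z₀ - h z₀)) hφz₀
    linarith
  have : h z₀ = ε + ε' * (Real.log R - Real.log (‖z₀‖)) := by
    simp only [hhdef, logAbs]; ring
  rw [← this]
  exact max_le h1 h2

/-- A solution of the equal-parameter system with nonnegative asymptotic data
is nonpositive. -/
theorem toda_sol_nonpos {c γ₀ γ₁ : ℝ} (hc : 0 < c) (h0 : 0 ≤ γ₀) (h1 : 0 ≤ γ₁)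
    {u v : ℂ → ℝ} (hsol : IsTodaSol c c u v) (hasym : HasAsymData γ₀ γ₁ u v) :
    ∀ z : ℂ, z ≠ 0 → u z ≤ 0 ∧ v z ≤ 0 := by
  obtain ⟨hu, hv, heq⟩ := hsol
  obtain ⟨huI, hvI, hu0, hv0⟩ := hasym
  -- Step 1: u + v ≤ 0
  have hsum : ∀ z : ℂ, z ≠ 0 → u z + v z ≤ 0 := by
    have hsI : TendstoZeroAtInfty (fun z => u z + v z) := by
      have := huI.add hvI
      simpa [TendstoZeroAtInfty] using this
    have hs0 : LogAsymAtZero (γ₀ + γ₁) (fun z => u z + v z) := by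
      have h := hu0.add hv0
      have heq' : (fun z : ℂ => (u z + v z) / Real.log (‖z‖))
          = fun z : ℂ => u z / Real.log (‖z‖) + v z / Real.log (‖z‖) := by
        funext z; rw [add_div]
      unfold LogAsymAtZero
      rw [heq']
      exact h
    have key := keyMP (fun z => u z + v z) (fun z => u z + v z)
      (hu.add hv) (hu.add hv)
      (fun ε hε => atInfty_bound hsI hε) (fun ε hε => atInfty_bound hsI hε)
      (fun ε hε => nearZero_bound (by linarith) hs0 hε)
      (fun ε hε => nearZero_bound (by linarith) hs0 hε)
      ?_
    · exact fun z hz => (key z hz).1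
    · intro z hz
      have hlapsum : lap (fun z => u z + v z) z = lap u z + lap v z :=
        lap_add isOpen_compl_singleton (by simpa using hz) hu hv
      have h4 : lap (fun z => u z + v z) z
          = 4 * (Real.exp (c * u z) - Real.exp (-(c * v z))) := by
        rw [hlapsum, (heq z hz).1, (heq z hz).2]; ring
      constructor <;> intro hpos _ <;> rw [h4] <;>
      · have hpos' : 0 < u z + v z := hpos
        have : Real.exp (-(c * v z)) < Real.exp (c * u z) :=
          Real.exp_lt_exp.2 (by nlinarith [mul_pos hc hpos'])
        linarith
  -- Step 2: u ≤ 0 and v ≤ 0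
  apply keyMP u v hu hv
    (fun ε hε => atInfty_bound huI hε) (fun ε hε => atInfty_bound hvI hε)
    (fun ε hε => nearZero_bound h0 hu0 hε) (fun ε hε => nearZero_bound h1 hv0 hε)
  intro z hz
  have hsz := hsum z hz
  constructor
  · intro hpos _
    rw [(heq z hz).1]
    have : Real.exp (v z - u z) < Real.exp (c * u z) :=
      Real.exp_lt_exp.2 (by nlinarith [mul_pos hc hpos])
    linarith
  · intro hpos _
    rw [(heq z hz).2]
    have : Real.exp (-(c * v z)) < Real.exp (v z - u z) :=
      Real.exp_lt_exp.2 (by nlinarith [mul_pos hc hpos])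
    linarith


end Aux

/-- Monotonicity in the parameter: for `0 < a < b`, the solution of the equal-parameter
system with parameter `a` lies below the one with parameter `b` (same asymptotic data). -/
theorem toda_parameter_monotonicity (a b γ₀ γ₁ : ℝ) (ha : 0 < a) (hab : a < b)
    (h0 : 0 ≤ γ₀) (h1 : 0 ≤ γ₁) (h2 : γ₁ ≤ 2 / b) (h3 : γ₀ - γ₁ ≤ 2)
    (ubar vbar : ℂ → ℝ) (hsolbar : IsTodaSol a a ubar vbar)
    (hasymbar : HasAsymData γ₀ γ₁ ubar vbar)
    (utilde vtilde : ℂ → ℝ) (hsoltilde : IsTodaSol b b utilde vtilde)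
    (hasymtilde : HasAsymData γ₀ γ₁ utilde vtilde) :
    ∀ z : ℂ, z ≠ 0 → ubar z ≤ utilde z ∧ vbar z ≤ vtilde z := by
  have hb : 0 < b := lt_trans ha hab
  have hbarneg := toda_sol_nonpos ha h0 h1 hsolbar hasymbar
  obtain ⟨hub, hvb, heqb⟩ := hsolbar
  obtain ⟨hubI, hvbI, hub0, hvb0⟩ := hasymbar
  obtain ⟨hut, hvt, heqt⟩ := hsoltilde
  obtain ⟨hutI, hvtI, hut0, hvt0⟩ := hasymtilde
  -- p = ubar - utilde, q = vbar - vtilde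
  have hpI : TendstoZeroAtInfty (fun z => ubar z - utilde z) := by
    have := hubI.sub hutI; simpa [TendstoZeroAtInfty] using this
  have hqI : TendstoZeroAtInfty (fun z => vbar z - vtilde z) := by
    have := hvbI.sub hvtI; simpa [TendstoZeroAtInfty] using this
  have hp0 : LogAsymAtZero 0 (fun z => ubar z - utilde z) := by
    have h := hub0.sub hut0
    have heq' : (fun z : ℂ => (ubar z - utilde z) / Real.log (‖z‖))
        = fun z : ℂ => ubar z / Real.log (‖z‖) - utilde z / Real.log (‖z‖) := by
      funext z; rw [sub_div]
    unfold LogAsymAtZero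
    rw [heq']
    simpa using h
  have hq0 : LogAsymAtZero 0 (fun z => vbar z - vtilde z) := by
    have h := hvb0.sub hvt0
    have heq' : (fun z : ℂ => (vbar z - vtilde z) / Real.log (‖z‖))
        = fun z : ℂ => vbar z / Real.log (‖z‖) - vtilde z / Real.log (‖z‖) := by
      funext z; rw [sub_div]
    unfold LogAsymAtZero
    rw [heq']
    simpa using h
  have key := keyMP (fun z => ubar z - utilde z) (fun z => vbar z - vtilde z)
    (hub.sub hut) (hvb.sub hvt)
    (fun ε hε => atInfty_bound hpI hε) (fun ε hε => atInfty_bound hqI hε)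
    (fun ε hε => nearZero_bound le_rfl hp0 hε) (fun ε hε => nearZero_bound le_rfl hq0 hε)
    ?_
  · intro z hz
    obtain ⟨k1, k2⟩ := key z hz
    have k1' : ubar z - utilde z ≤ 0 := k1
    have k2' : vbar z - vtilde z ≤ 0 := k2
    exact ⟨by linarith, by linarith⟩
  · intro z hz
    obtain ⟨hubz, hvbz⟩ := hbarneg z hz
    have hlapp : lap (fun z => ubar z - utilde z) z = lap ubar z - lap utilde z :=
      lap_sub isOpen_compl_singleton (by simpa using hz) hub hut
    have hlapq : lap (fun z => vbar z - vtilde z) z = lap vbar z - lap vtilde z :=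
      lap_sub isOpen_compl_singleton (by simpa using hz) hvb hvt
    constructor
    · intro hpos hqp
      have hpos' : 0 < ubar z - utilde z := hpos
      have hqp' : vbar z - vtilde z ≤ ubar z - utilde z := hqp
      rw [hlapp, (heqb z hz).1, (heqt z hz).1]
      have e1 : Real.exp (b * utilde z) < Real.exp (a * ubar z) :=
        Real.exp_lt_exp.2 (by nlinarith [mul_pos hb hpos', mul_nonneg (sub_nonneg.2 hab.le) (neg_nonneg.2 hubz)])
      have e2 : Real.exp (vbar z - ubar z) ≤ Real.exp (vtilde z - utilde z) :=
        Real.exp_le_exp.2 (by linarith)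
      linarith
    · intro hpos hpq
      have hpos' : 0 < vbar z - vtilde z := hpos
      have hpq' : ubar z - utilde z ≤ vbar z - vtilde z := hpq
      rw [hlapq, (heqb z hz).2, (heqt z hz).2]
      have e1 : Real.exp (vtilde z - utilde z) ≤ Real.exp (vbar z - ubar z) :=
        Real.exp_le_exp.2 (by linarith)
      have e2 : Real.exp (-(a * vbar z)) < Real.exp (-(b * vtilde z)) :=
        Real.exp_lt_exp.2 (by nlinarith [mul_pos hb hpos', mul_nonneg (sub_nonneg.2 hab.le) (neg_nonneg.2 hvbz)])
      linarith
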